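/- arXiv:2301.08793 — 9 statements merged into one kernel-verified Lean document; each statement's English description precedes it below -/
import Mathlib

section
/- If S is a left legal semigroup satisfying the identity ab = a²b, then the map φ : S → S given by φ(a) = a² is a homomorphism of S onto S² that fixes every element of S². -/
/-- In a left legal semigroup satisfying ab = a²b, the squaring
map is a homomorphism of S onto S² fixing every element of S². -/
theorem stmt_5 {S : Type*} [Semigroup S]
    (hleg : ∀ a b : S, a * b * a = a * b)
    (hsq : ∀ a b : S, a * b = a * a * b) :
    (∀ a b : S, (a * b) * (a * b) = (a * a) * (b * b)) ∧
    (Set.range (fun a : S => a * a) = {x : S | ∃ a b : S, x = a * b}) ∧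
    (∀ x : S, (∃ a b : S, x = a * b) → x * x = x) := by
  have habb : ∀ a b : S, a * b * b = a * b := by
    intro a b
    calc a * b * b = a * b * a * b := by rw [hleg a b]
      _ = a * (b * a * b) := by rw [mul_assoc a b a, mul_assoc]
      _ = a * (b * a) := by rw [hleg b a]
      _ = a * b * a := by rw [mul_assoc]
      _ = a * b := hleg a b
  have idem : ∀ a b : S, (a * b) * (a * b) = a * b := by
    intro a b
    calc (a * b) * (a * b) = a * b * a * b := (mul_assoc (a*b) a b).symm
      _ = a * b * b := by rw [hleg]
      _ = a * b := habb a b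
  refine ⟨?_, ?_, ?_⟩
  · intro a b
    calc (a * b) * (a * b) = a * b := idem a b
      _ = a * b * b := (habb a b).symm
      _ = a * a * b * b := by rw [← hsq]
      _ = a * a * (b * b) := by rw [mul_assoc]
  · ext x
    constructor
    · rintro ⟨a, rfl⟩
      exact ⟨a, a, rfl⟩
    · rintro ⟨a, b, rfl⟩
      exact ⟨a * b, (idem a b)⟩
  · rintro x ⟨a, b, rfl⟩
    exact idem a b
end

section
/- A semigroup with at least two elements is subdirectly irreducible and satisfies the identity ab = ac if and only if it is either a two-element left zero semigroup or a two-element zero semigroup. -/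
/-- A semigroup is subdirectly irreducible iff the intersection of all its
non-trivial congruences is non-trivial. -/
def SubdirectlyIrreducibleSemigroup (S : Type*) [Semigroup S] : Prop :=
  ∃ a b : S, a ≠ b ∧ ∀ c : Con S, c ≠ ⊥ → c a b

private lemma aux_pair {S : Type*} [Semigroup S]
    (h : ∀ a b c : S, a * b = a * c)
    (a b : S) (hab : a ≠ b) (hmono : ∀ c : Con S, c ≠ ⊥ → c a b)
    (p q : S) (hpq : p ≠ q)
    (hcol : p * p = q * q ∨ (p * p = p ∧ q * q = q)) :
    (a = p ∧ b = q) ∨ (a = q ∧ b = p) := by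
  have hmul : ∀ u v : S, u * v = u * u := fun u v => h u v u
  let c : Con S :=
    { r := fun u v => u = v ∨ (u = p ∧ v = q) ∨ (u = q ∧ v = p)
      iseqv := by
        refine ⟨fun x => Or.inl rfl, ?_, ?_⟩
        · rintro x y (rfl | ⟨rfl, rfl⟩ | ⟨rfl, rfl⟩)
          · exact Or.inl rfl
          · exact Or.inr (Or.inr ⟨rfl, rfl⟩)
          · exact Or.inr (Or.inl ⟨rfl, rfl⟩)
        · rintro x y z h1 h2
          rcases h1 with e | ⟨e1, e2⟩ | ⟨e1, e2⟩ <;>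
            rcases h2 with f | ⟨f1, f2⟩ | ⟨f1, f2⟩ <;> subst_vars <;> tauto
      mul' := by
        rintro w x y z hwx _
        have e1 : w * y = w * w := hmul w y
        have e2 : x * z = x * x := hmul x z
        rw [e1, e2]
        rcases hwx with rfl | ⟨rfl, rfl⟩ | ⟨rfl, rfl⟩
        · exact Or.inl rfl
        · rcases hcol with hc | ⟨hc1, hc2⟩
          · exact Or.inl hc
          · exact Or.inr (Or.inl ⟨hc1, hc2⟩)
        · rcases hcol with hc | ⟨hc1, hc2⟩
          · exact Or.inl hc.symm
          · exact Or.inr (Or.inr ⟨hc2, hc1⟩) }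
  have hcbot : c ≠ ⊥ := by
    intro hc
    have hcpq : c p q := Or.inr (Or.inl ⟨rfl, rfl⟩)
    rw [hc] at hcpq
    exact hpq hcpq
  rcases hmono c hcbot with hEq | hrest
  · exact absurd hEq hab
  · exact hrest

/-- A semigroup with at least two elements is subdirectly
irreducible and satisfies ab = ac iff it is a two-element left zero semigroup
or a two-element zero semigroup. -/
theorem stmt_10 {S : Type*} [Semigroup S]
    (htwo : ∃ a b : S, a ≠ b) :
    (SubdirectlyIrreducibleSemigroup S ∧ ∀ a b c : S, a * b = a * c) ↔
    ((∃ x y : S, x ≠ y ∧ ∀ z : S, z = x ∨ z = y) ∧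
      ((∀ a b : S, a * b = a) ∨ (∃ z : S, ∀ a b : S, a * b = z))) := by
  constructor
  · rintro ⟨⟨a, b, hab, hmono⟩, h⟩
    have hmul : ∀ u v : S, u * v = u * u := fun u v => h u v u
    have hid : ∀ x : S, (x * x) * (x * x) = x * x := by
      intro x
      rw [mul_assoc]
      exact h x _ x
    by_cases hall : ∀ x : S, x * x = x
    · refine ⟨⟨a, b, hab, fun z => ?_⟩, Or.inl fun u v => (hmul u v).trans (hall u)⟩
      by_contra hz
      push_neg at hz
      obtain ⟨hza, hzb⟩ := hz
      rcases aux_pair h a b hab hmono z a hza (Or.inr ⟨hall z, hall a⟩) with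
        ⟨haz, _⟩ | ⟨_, hbz⟩
      · exact hza haz.symm
      · exact hzb hbz.symm
    · push_neg at hall
      obtain ⟨w, hw⟩ := hall
      have hcase := aux_pair h a b hab hmono w (w * w) (Ne.symm hw) (Or.inl (hid w).symm)
      have hfab : a * a = b * b := by
        rcases hcase with ⟨rfl, rfl⟩ | ⟨rfl, rfl⟩
        · exact (hid _).symm
        · exact hid _
      have huniq : ∀ p q : S, p * p = p → q * q = q → p = q := by
        intro p q hp hq
        by_contra hne
        rcases aux_pair h a b hab hmono p q hne (Or.inr ⟨hp, hq⟩) with ⟨rfl, rfl⟩ | ⟨rfl, rfl⟩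
        · exact hab (hp.symm.trans (hfab.trans hq))
        · exact hab (hq.symm.trans (hfab.trans hp))
      have hconst : ∀ x : S, x * x = a * a := fun x => huniq (x * x) (a * a) (hid x) (hid a)
      refine ⟨⟨a, b, hab, fun z => ?_⟩,
        Or.inr ⟨a * a, fun u v => (hmul u v).trans (hconst u)⟩⟩
      by_contra hz
      push_neg at hz
      obtain ⟨hza, hzb⟩ := hz
      rcases aux_pair h a b hab hmono z a hza (Or.inl (hconst z)) with
        ⟨haz, _⟩ | ⟨_, hbz⟩
      · exact hza haz.symm
      · exact hzb hbz.symm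
  · rintro ⟨⟨x, y, hxy, hz⟩, hor⟩
    refine ⟨⟨x, y, hxy, fun c hc => ?_⟩, ?_⟩
    · have hex : ∃ u v : S, u ≠ v ∧ c u v := by
        by_contra hcon
        push_neg at hcon
        apply hc
        have h' : ∀ u v, c u v → u = v := fun u v huv =>
          by_contra fun hne => hcon u v hne huv
        exact le_antisymm h' bot_le
      obtain ⟨u, v, huv, hcuv⟩ := hex
      rcases hz u with rfl | rfl <;> rcases hz v with rfl | rfl
      · exact absurd rfl huv
      · exact hcuv
      · exact c.symm hcuv
      · exact absurd rfl huv
    · rcases hor with hl | ⟨z0, hz0⟩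
      · intro a b c; rw [hl a b, hl a c]
      · intro a b c; rw [hz0 a b, hz0 a c]
end

section
/- Every left legal semigroup is a Putcha semigroup: if a ∈ S¹bS¹ then a^m ∈ S¹b²S¹ for some positive integer m. -/
/-- `spow a k` is the `k`-th power of `a` in a semigroup, for `k ≥ 1`
(with `spow a 0` defined to be `a` as a junk value). -/
def spow {S : Type*} [Semigroup S] (a : S) : ℕ → S
  | 0 => a
  | 1 => a
  | (n + 2) => a * spow a (n + 1)

/-- Every left legal semigroup is a Putcha semigroup:
if a ∈ S¹bS¹ then a^m ∈ S¹b²S¹ for some m ≥ 1. -/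
theorem stmt_12 {S : Type*} [Semigroup S]
    (hleg : ∀ a b : S, a * b * a = a * b) :
    ∀ a b : S,
      (a = b ∨ (∃ s : S, a = b * s) ∨ (∃ s : S, a = s * b) ∨
        (∃ s t : S, a = s * b * t)) →
      ∃ m : ℕ, 1 ≤ m ∧
        (spow a m = b * b ∨ (∃ s : S, spow a m = (b * b) * s) ∨
          (∃ s : S, spow a m = s * (b * b)) ∨
          (∃ s t : S, spow a m = s * (b * b) * t)) := by
  intro a b h
  rcases h with rfl | ⟨s, rfl⟩ | ⟨s, rfl⟩ | ⟨s, t, rfl⟩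
  · exact ⟨2, by norm_num, Or.inl rfl⟩
  · refine ⟨1, le_refl 1, Or.inr (Or.inr (Or.inl ⟨b * s, ?_⟩))⟩
    show b * s = b * s * (b * b)
    calc b * s = b * s * b := (hleg b s).symm
    _ = b * s * b * b := by conv_rhs => rw [hleg b s]
    _ = b * s * (b * b) := by rw [mul_assoc]
  · refine ⟨2, by norm_num, Or.inr (Or.inr (Or.inl ⟨s, ?_⟩))⟩
    show s * b * (s * b) = s * (b * b)
    calc s * b * (s * b) = s * b * s * b := by rw [← mul_assoc]
    _ = s * b * b := by rw [hleg s b]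
    _ = s * (b * b) := by rw [mul_assoc]
  · refine ⟨1, le_refl 1, Or.inr (Or.inr (Or.inl ⟨s * b * t, ?_⟩))⟩
    show s * b * t = s * b * t * (b * b)
    have hab : s * b * t * b = s * b * t := by
      rw [mul_assoc s b t, mul_assoc s (b * t) b, hleg b t]
    calc s * b * t = s * b * t * b := hab.symm
    _ = s * b * t * b * b := by conv_rhs => rw [hab]
    _ = s * b * t * (b * b) := by rw [mul_assoc]
end

section
/- Let S be a left legal semigroup. Define η = {(a,b) : ∃n ≥ 1, a^n ∈ SbS and b^n ∈ SaS} and τ = {(a,b) : ∃n ≥ 1, a^n b = a^{n+1} and b^n a = b^{n+1}}. Then η = τ. -/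
lemma spow_collapse {S : Type*} [Semigroup S]
    (hleg : ∀ a b : S, a * b * a = a * b) (a : S) :
    ∀ n : ℕ, spow a (n + 2) = a * a := by
  intro n
  induction n with
  | zero => rfl
  | succ m ih =>
      show a * spow a (m + 2) = a * a
      rw [ih, ← mul_assoc, hleg a a]

lemma sq_mul_eq {S : Type*} [Semigroup S]
    (hleg : ∀ a b : S, a * b * a = a * b) {a b p q : S}
    (h : a * a = p * b * q) : a * a * b = a * a := by
  set A := a * a with hA
  have hAA : A * A = A := by
    rw [hA, ← mul_assoc, hleg a a, hleg a a]
  have h3 : A * (p * b) = A := by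
    rw [h]; exact hleg (p * b) q
  have hApb : A * p * b = A := by rw [mul_assoc]; exact h3
  have h4 : A * p * b * (A * p) = A * p * b := hleg (A * p) b
  rw [hApb] at h4
  have hAp : A * p = A := by
    rw [← mul_assoc, hAA] at h4; exact h4
  calc A * b = A * p * b := by rw [hAp]
  _ = A := hApb

lemma sq_mem {S : Type*} [Semigroup S] {a b : S}
    {n : ℕ} (hn : 1 ≤ n)
    (hleg : ∀ a b : S, a * b * a = a * b)
    (h : ∃ x y : S, spow a n = x * b * y) :
    ∃ p q : S, a * a = p * b * q := by
  obtain ⟨x, y, hxy⟩ := h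
  match n, hn with
  | 1, _ =>
      exact ⟨a * x, y, by
        have : spow a 1 = x * b * y := hxy
        show a * a = a * x * b * y
        rw [show (a : S) = x * b * y from this, ← mul_assoc, ← mul_assoc]⟩
  | (m + 2), _ =>
      refine ⟨x, y, ?_⟩
      rw [← spow_collapse hleg a m, hxy]

/-- In a left legal semigroup, the relations
η = {(a,b) : ∃ n ≥ 1, a^n ∈ SbS ∧ b^n ∈ SaS} and
τ = {(a,b) : ∃ n ≥ 1, a^n b = a^{n+1} ∧ b^n a = b^{n+1}} coincide. -/
theorem stmt_13 {S : Type*} [Semigroup S]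
    (hleg : ∀ a b : S, a * b * a = a * b) :
    ∀ a b : S,
      (∃ n : ℕ, 1 ≤ n ∧ (∃ x y : S, spow a n = x * b * y) ∧
        (∃ x y : S, spow b n = x * a * y)) ↔
      (∃ n : ℕ, 1 ≤ n ∧ spow a n * b = spow a (n + 1) ∧
        spow b n * a = spow b (n + 1)) := by
  intro a b
  constructor
  · rintro ⟨n, hn, ha, hb⟩
    obtain ⟨p, q, hpq⟩ := sq_mem hn hleg ha
    obtain ⟨u, v, huv⟩ := sq_mem hn hleg hb
    refine ⟨2, by norm_num, ?_, ?_⟩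
    · have h1 : spow a 2 = a * a := rfl
      have h2 : spow a 3 = a * a := spow_collapse hleg a 1
      rw [h1, h2]
      exact sq_mul_eq hleg hpq
    · have h1 : spow b 2 = b * b := rfl
      have h2 : spow b 3 = b * b := spow_collapse hleg b 1
      rw [h1, h2]
      exact sq_mul_eq hleg huv
  · rintro ⟨n, hn, ha, hb⟩
    refine ⟨n + 1, by omega, ⟨spow a n, spow a n, ?_⟩, ⟨spow b n, spow b n, ?_⟩⟩
    · rw [← ha]; exact (hleg (spow a n) b).symm
    · rw [← hb]; exact (hleg (spow b n) a).symm
end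

section
/- For elements a, b of a left legal semigroup S, there exists a positive integer n with a^n b = a^{n+1} and b^n a = b^{n+1} if and only if a²b = a² and b²a = b². -/
lemma spow_two_add {S : Type*} [Semigroup S]
    (hleg : ∀ a b : S, a * b * a = a * b) (a : S) :
    ∀ n, spow a (n + 2) = a * a
  | 0 => rfl
  | (n + 1) => by
    show a * spow a (n + 2) = a * a
    rw [spow_two_add hleg a n, ← mul_assoc, hleg]

/-- For elements a, b of a left legal semigroup, there is n ≥ 1
with a^n b = a^{n+1} and b^n a = b^{n+1} iff a²b = a² and b²a = b². -/
theorem stmt_14 {S : Type*} [Semigroup S]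
    (hleg : ∀ a b : S, a * b * a = a * b) :
    ∀ a b : S,
      (∃ n : ℕ, 1 ≤ n ∧ spow a n * b = spow a (n + 1) ∧
        spow b n * a = spow b (n + 1)) ↔
      (a * a * b = a * a ∧ b * b * a = b * b) := by
  intro a b
  constructor
  · rintro ⟨n, hn, h1, h2⟩
    match n, hn with
    | 1, _ =>
      simp only [spow, spow_two_add hleg] at h1 h2
      constructor
      · calc a * a * b = a * (a * b) := by rw [mul_assoc]
          _ = a * (a * a) := by rw [h1]
          _ = a * a * a := by rw [mul_assoc]
          _ = a * a := hleg a a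
      · calc b * b * a = b * (b * a) := by rw [mul_assoc]
          _ = b * (b * b) := by rw [h2]
          _ = b * b * b := by rw [mul_assoc]
          _ = b * b := hleg b b
    | (m + 2), _ =>
      rw [spow_two_add hleg, spow_two_add hleg] at h1 h2
      exact ⟨h1, h2⟩
  · rintro ⟨h1, h2⟩
    refine ⟨2, by norm_num, ?_, ?_⟩
    · show spow a (0 + 2) * b = spow a (1 + 2)
      rw [spow_two_add hleg, spow_two_add hleg]; exact h1
    · show spow b (0 + 2) * a = spow b (1 + 2)
      rw [spow_two_add hleg, spow_two_add hleg]; exact h2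
end

section
/- For a left legal semigroup S, the relation τ defined by (a,b) ∈ τ iff a²b = a² and b²a = b² is a congruence on S whose quotient is a semilattice (commutative idempotent semigroup). -/
/-- In a left legal semigroup, the relation τ given by
(a,b) ∈ τ iff a²b = a² and b²a = b² is a congruence whose quotient is a
semilattice. -/
theorem stmt_15 {S : Type*} [Semigroup S]
    (hleg : ∀ a b : S, a * b * a = a * b) :
    ∃ c : Con S,
      (∀ a b : S, c a b ↔ (a * a * b = a * a ∧ b * b * a = b * b)) ∧
      (∀ x y : c.Quotient, x * y = y * x) ∧
      (∀ x : c.Quotient, x * x = x) := by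
  -- transitivity helper
  have htrans : ∀ {a b c : S},
      (a * a * b = a * a ∧ b * b * a = b * b) →
      (b * b * c = b * b ∧ c * c * b = c * c) →
      (a * a * c = a * a ∧ c * c * a = c * c) := by
    rintro a b c ⟨h1, h2⟩ ⟨h3, h4⟩
    constructor
    · have hbb : a * a * (b * b) = a * a := by
        rw [← mul_assoc, h1, h1]
      calc a * a * c = a * a * (b * b) * c := by rw [hbb]
        _ = a * a * (b * b * c) := by rw [mul_assoc]
        _ = a * a * (b * b) := by rw [h3]
        _ = a * a := hbb
    · have hbb : c * c * (b * b) = c * c := by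
        rw [← mul_assoc, h4, h4]
      calc c * c * a = c * c * (b * b) * a := by rw [hbb]
        _ = c * c * (b * b * a) := by rw [mul_assoc]
        _ = c * c * (b * b) := by rw [h2]
        _ = c * c := hbb
  -- left compatibility
  have hleft : ∀ {a b : S} (c : S),
      (a * a * b = a * a ∧ b * b * a = b * b) →
      ((c * a) * (c * a) * (c * b) = (c * a) * (c * a) ∧
       (c * b) * (c * b) * (c * a) = (c * b) * (c * b)) := by
    have key : ∀ a b c : S, a * a * b = a * a →
        (c * a) * (c * a) * (c * b) = (c * a) * (c * a) := by
      intro a b c h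
      have sq : (c * a) * (c * a) = c * (a * a) := by
        rw [← mul_assoc, hleg c a, mul_assoc]
      rw [sq]
      calc c * (a * a) * (c * b) = c * (a * a) * c * b := by simp only [mul_assoc]
        _ = c * (a * a) * b := by rw [hleg c (a * a)]
        _ = c * (a * a * b) := by rw [mul_assoc]
        _ = c * (a * a) := by rw [h]
    rintro a b c ⟨h1, h2⟩
    exact ⟨key a b c h1, key b a c h2⟩
  -- right compatibility
  have hright : ∀ {a b : S} (c : S),
      (a * a * b = a * a ∧ b * b * a = b * b) →
      ((a * c) * (a * c) * (b * c) = (a * c) * (a * c) ∧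
       (b * c) * (b * c) * (a * c) = (b * c) * (b * c)) := by
    have key : ∀ a b c : S, a * a * b = a * a →
        (a * c) * (a * c) * (b * c) = (a * c) * (a * c) := by
      intro a b c h
      have sq : (a * c) * (a * c) = a * (c * c) := by
        rw [← mul_assoc, hleg a c, mul_assoc]
      have pref : a * (c * c) * a = a * (c * c) := hleg a (c * c)
      have step1 : a * (c * c) * b = a * (c * c) := by
        calc a * (c * c) * b = a * (c * c) * a * a * b := by
              rw [pref, pref]
          _ = a * (c * c) * (a * a * b) := by
              simp only [mul_assoc]
          _ = a * (c * c) * (a * a) := by rw [h]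
          _ = a * (c * c) * a * a := by simp only [mul_assoc]
          _ = a * (c * c) := by rw [pref, pref]
      rw [sq]
      calc a * (c * c) * (b * c)
          = a * (c * (c * b * c)) := by
            simp only [mul_assoc]
        _ = a * (c * (c * b)) := by rw [hleg c b]
        _ = a * (c * c) * b := by simp only [mul_assoc]
        _ = a * (c * c) := step1
    rintro a b c ⟨h1, h2⟩
    exact ⟨key a b c h1, key b a c h2⟩
  refine ⟨⟨⟨fun a b => a * a * b = a * a ∧ b * b * a = b * b,
      ⟨fun a => ⟨hleg a a, hleg a a⟩, fun h => ⟨h.2, h.1⟩,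
        fun h1 h2 => htrans h1 h2⟩⟩, ?_⟩, fun a b => Iff.rfl, ?_, ?_⟩
  · intro w x y z h1 h2
    exact htrans (hright y h1) (hleft x h2)
  · -- commutativity
    intro x y
    induction x using Con.induction_on with
    | H a =>
      induction y using Con.induction_on with
      | H b =>
        have key : ∀ a b : S, (a * b) * (a * b) * (b * a) = (a * b) * (a * b) := by
          intro a b
          have sq : (a * b) * (a * b) = a * (b * b) := by
            rw [← mul_assoc, hleg a b, mul_assoc]
          rw [sq]
          calc a * (b * b) * (b * a)
              = a * (b * b * b) * a := by simp only [mul_assoc]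
            _ = a * (b * b) * a := by rw [hleg b b]
            _ = a * (b * b) := hleg a (b * b)
        rw [← Con.coe_mul, ← Con.coe_mul, Con.eq]
        exact ⟨key a b, key b a⟩
  · -- idempotency
    intro x
    induction x using Con.induction_on with
    | H a =>
      have h3 : a * a * a = a * a := hleg a a
      rw [← Con.coe_mul, Con.eq]
      refine ⟨?_, ?_⟩
      · rw [show a * a * (a * a) = a * a by rw [← mul_assoc, h3, h3], h3]
      · rw [← mul_assoc, h3, h3]
end

section
/- For a semigroup S, the following are equivalent: (a) S is left legal and satisfies a²b = a² for all a, b; (b) S² is a left zero semigroup. -/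
/-- S is left legal with a²b = a² iff S² is a left zero
semigroup. -/
theorem stmt_16 {S : Type*} [Semigroup S] :
    ((∀ a b : S, a * b * a = a * b) ∧ (∀ a b : S, a * a * b = a * a)) ↔
    (∀ e f : S, (∃ a b : S, e = a * b) → (∃ a b : S, f = a * b) → e * f = e) := by
  constructor
  · rintro ⟨h1, h2⟩ e f ⟨a, b, rfl⟩ -
    have idem : a * b * (a * b) = a * b := by
      calc a * b * (a * b) = a * (b * a * b) := by rw [mul_assoc, ← mul_assoc b a b]
        _ = a * (b * a) := by rw [h1]
        _ = a * b * a := (mul_assoc a b a).symm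
        _ = a * b := h1 a b
    calc a * b * f = a * b * (a * b) * f := by rw [idem]
      _ = a * b * (a * b) := h2 (a * b) f
      _ = a * b := idem
  · rintro h
    constructor
    · intro a b
      have h2 : a * b * (a * b) = a * b := h _ _ ⟨a, b, rfl⟩ ⟨a, b, rfl⟩
      have h1 : a * b * (a * b * a) = a * b := h _ _ ⟨a, b, rfl⟩ ⟨a * b, a, rfl⟩
      calc a * b * a = a * b * (a * b) * a := by rw [h2]
        _ = a * b * (a * b * a) := by rw [mul_assoc]
        _ = a * b := h1
    · intro a b
      have h2 : a * a * (a * a) = a * a := h _ _ ⟨a, a, rfl⟩ ⟨a, a, rfl⟩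
      have h1 : a * a * (a * a * b) = a * a := h _ _ ⟨a, a, rfl⟩ ⟨a * a, b, rfl⟩
      calc a * a * b = a * a * (a * a) * b := by rw [h2]
        _ = a * a * (a * a * b) := by rw [mul_assoc]
        _ = a * a := h1
end

section
/- A left legal semigroup S is right separative if and only if it is weakly separative. -/
/-- A left legal semigroup is right separative iff it is weakly
separative. -/
theorem stmt_17 {S : Type*} [Semigroup S]
    (hleg : ∀ a b : S, a * b * a = a * b) :
    (∀ a b : S, a * b = b * b → b * a = a * a → a = b) ↔
    (∀ a b : S, a * a = a * b → a * b = b * b → a = b) := by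
  constructor
  · intro h a b h1 h2
    -- h1 : a*a = a*b, h2 : a*b = b*b
    have hba : b * a = a * a := by
      calc b * a = b * a * b := (hleg b a).symm
        _ = b * (a * b) := by rw [mul_assoc]
        _ = b * (b * b) := by rw [h2]
        _ = b * b * b := by rw [mul_assoc]
        _ = b * b := hleg b b
        _ = a * a := by rw [← h2, ← h1]
    exact h a b h2 hba
  · intro h a b h1 h2
    -- h1 : a*b = b*b, h2 : b*a = a*a
    have haa : a * a = a * b := by
      calc a * a = a * a * a := (hleg a a).symm
        _ = b * a * a := by rw [h2]
        _ = b * (a * a) := by rw [mul_assoc]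
        _ = b * (b * a) := by rw [← h2]
        _ = b * b * a := by rw [mul_assoc]
        _ = a * b * a := by rw [← h1]
        _ = a * b := hleg a b
    exact h a b haa h1
end

section
/- Every left separative left legal semigroup is commutative. -/
/-- Every left separative left legal semigroup is commutative. -/
theorem stmt_18 {S : Type*} [Semigroup S]
    (hleg : ∀ a b : S, a * b * a = a * b)
    (hls : ∀ a b : S, a * b = a * a → b * a = b * b → a = b) :
    ∀ a b : S, a * b = b * a := by
  -- every element is idempotent
  have hidem : ∀ b : S, b * b = b := by
    intro b
    have hc : b * b * b = b * b := hleg b b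
    have h1 : (b * b) * b = (b * b) * (b * b) := by
      rw [hc, ← mul_assoc, hc, hc]
    have h2 : b * (b * b) = b * b := by rw [← mul_assoc, hc]
    exact hls (b * b) b h1 h2
  intro a b
  have h1 : (a * b) * (b * a) = (a * b) * (a * b) := by
    calc (a * b) * (b * a) = a * (b * b) * a := by rw [mul_assoc, ← mul_assoc b b a, ← mul_assoc]
    _ = a * b * a := by rw [hidem b]
    _ = a * b := hleg a b
    _ = (a * b) * (a * b) := by
        rw [mul_assoc a b (a*b), ← mul_assoc b a b, hleg b a, ← mul_assoc, hleg a b]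
  have h2 : (b * a) * (a * b) = (b * a) * (b * a) := by
    calc (b * a) * (a * b) = b * (a * a) * b := by rw [mul_assoc, ← mul_assoc a a b, ← mul_assoc]
    _ = b * a * b := by rw [hidem a]
    _ = b * a := hleg b a
    _ = (b * a) * (b * a) := by
        rw [mul_assoc b a (b*a), ← mul_assoc a b a, hleg a b, ← mul_assoc, hleg b a]
  exact hls (a * b) (b * a) h1 h2
end
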